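/- arXiv:1509.06020 — 2 statements merged into one kernel-verified Lean document; each statement's English description precedes it below -/
import Mathlib

section
/- Let D : ℝ → ℝ be continuously differentiable and nondecreasing with D(0) = 0, and suppose there exist 0 < m < M such that m ≤ D′(ξ) ≤ M for all |ξ| ≥ 1. Then there exist constants c₀ ≥ 0 and c₁ > 0 such that for all s ∈ ℝ: (D(s))² + s² ≤ c₀ + c₁·D(s)·s. In fact one may take c₀ = 4 and c₁ = 2/m + max{sup_{|ξ|≤1} D′(ξ), M}. -/
set_option maxHeartbeats 1000000 in
/-- Pointwise comparison of damping terms: if `D` is `C¹`, nondecreasing, `D 0 = 0`,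
and `m ≤ D' ξ ≤ M` for `|ξ| ≥ 1` (with `0 < m < M`), then there are `c₀ ≥ 0`, `c₁ > 0`
with `(D s)^2 + s^2 ≤ c₀ + c₁ * D s * s` for all `s`; in fact one may take `c₀ = 4`
and `c₁ = 2/m + max (sup of D' over |ξ| ≤ 1) M`. -/
theorem damping_comparison (D : ℝ → ℝ) (hC1 : ContDiff ℝ 1 D)
    (hmono : Monotone D) (h0 : D 0 = 0) (m M : ℝ) (hm : 0 < m) (hmM : m < M)
    (hderiv : ∀ ξ : ℝ, 1 ≤ |ξ| → m ≤ deriv D ξ ∧ deriv D ξ ≤ M) :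
    (∃ c₀ c₁ : ℝ, 0 ≤ c₀ ∧ 0 < c₁ ∧
      ∀ s : ℝ, (D s) ^ 2 + s ^ 2 ≤ c₀ + c₁ * (D s * s)) ∧
    (∀ s : ℝ, (D s) ^ 2 + s ^ 2 ≤
      4 + (2 / m + max (sSup (deriv D '' {ξ : ℝ | |ξ| ≤ 1})) M) * (D s * s)) := by
  have hdiff : Differentiable ℝ D := hC1.differentiable one_ne_zero
  have hcont : Continuous (deriv D) := hC1.continuous_deriv le_rfl
  -- deriv is nonnegative everywhere
  have hd0 : ∀ x : ℝ, 0 ≤ deriv D x := by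
    intro x
    have h := (hdiff x).hasDerivAt
    rw [hasDerivAt_iff_tendsto_slope] at h
    have h2 : Filter.Tendsto (slope D x) (nhdsWithin x (Set.Ioi x)) (nhds (deriv D x)) :=
      h.mono_left (nhdsWithin_mono x (fun y hy => ne_of_gt hy))
    refine ge_of_tendsto h2 ?_
    filter_upwards [self_mem_nhdsWithin] with y hy
    rw [slope_def_field]
    exact div_nonneg (sub_nonneg.2 (hmono (le_of_lt hy))) (sub_nonneg.2 (le_of_lt hy))
  set K := sSup (deriv D '' {ξ : ℝ | |ξ| ≤ 1}) with hK
  have hset : {ξ : ℝ | |ξ| ≤ 1} = Set.Icc (-1 : ℝ) 1 := by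
    ext x; simp [abs_le]
  have hbdd : BddAbove (deriv D '' {ξ : ℝ | |ξ| ≤ 1}) := by
    rw [hset]; exact ((isCompact_Icc).image hcont).bddAbove
  have hKub : ∀ ξ : ℝ, |ξ| ≤ 1 → deriv D ξ ≤ K := fun ξ hξ => le_csSup hbdd ⟨ξ, hξ, rfl⟩
  have hK0 : 0 ≤ K := le_trans (hd0 0) (hKub 0 (by norm_num))
  set L := max K M with hL
  have hKL : K ≤ L := le_max_left _ _
  have hML : M ≤ L := le_max_right _ _
  have hL0 : 0 ≤ L := le_trans hK0 hKL
  -- MVT bounds on [-1,1]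
  have hub : ∀ x : ℝ, 0 ≤ x → x ≤ 1 → D x ≤ K * x := by
    intro x h0x h1x
    have := (convex_Icc (-1 : ℝ) 1).image_sub_le_mul_sub_of_deriv_le
      (hdiff.continuous.continuousOn)
      (fun y _ => (hdiff y).differentiableWithinAt)
      (fun y hy => by
        rw [interior_Icc] at hy
        exact hKub y (abs_le.2 ⟨hy.1.le, hy.2.le⟩))
      0 (by constructor <;> norm_num) x ⟨by linarith, h1x⟩ h0x
    rw [h0] at this; linarith
  have hlbneg : ∀ x : ℝ, -1 ≤ x → x ≤ 0 → K * x ≤ D x := by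
    intro x h1x h0x
    have := (convex_Icc (-1 : ℝ) 1).image_sub_le_mul_sub_of_deriv_le
      (hdiff.continuous.continuousOn)
      (fun y _ => (hdiff y).differentiableWithinAt)
      (fun y hy => by
        rw [interior_Icc] at hy
        exact hKub y (abs_le.2 ⟨hy.1.le, hy.2.le⟩))
      x ⟨h1x, by linarith⟩ 0 (by constructor <;> norm_num) h0x
    rw [h0] at this; linarith
  -- MVT bounds on [1, ∞)
  have hge1 : ∀ s : ℝ, 1 ≤ s → m * (s - 1) ≤ D s - D 1 := by
    intro s hs
    exact (convex_Ici (1 : ℝ)).mul_sub_le_image_sub_of_le_deriv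
      (hdiff.continuous.continuousOn)
      (fun y _ => (hdiff y).differentiableWithinAt)
      (fun y hy => by
        rw [interior_Ici] at hy
        exact (hderiv y (le_abs.2 (Or.inl hy.le))).1)
      1 Set.self_mem_Ici s hs hs
  have hle1 : ∀ s : ℝ, 1 ≤ s → D s - D 1 ≤ M * (s - 1) := by
    intro s hs
    exact (convex_Ici (1 : ℝ)).image_sub_le_mul_sub_of_deriv_le
      (hdiff.continuous.continuousOn)
      (fun y _ => (hdiff y).differentiableWithinAt)
      (fun y hy => by
        rw [interior_Ici] at hy
        exact (hderiv y (le_abs.2 (Or.inl hy.le))).2)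
      1 Set.self_mem_Ici s hs hs
  -- MVT bounds on (-∞, -1]
  have hgen1 : ∀ s : ℝ, s ≤ -1 → m * (-1 - s) ≤ D (-1) - D s := by
    intro s hs
    exact (convex_Iic (-1 : ℝ)).mul_sub_le_image_sub_of_le_deriv
      (hdiff.continuous.continuousOn)
      (fun y _ => (hdiff y).differentiableWithinAt)
      (fun y hy => by
        rw [interior_Iic] at hy
        exact (hderiv y (le_abs.2 (Or.inr (by linarith [hy.out])))).1)
      s hs (-1) Set.self_mem_Iic hs
  have hlen1 : ∀ s : ℝ, s ≤ -1 → D (-1) - D s ≤ M * (-1 - s) := by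
    intro s hs
    exact (convex_Iic (-1 : ℝ)).image_sub_le_mul_sub_of_deriv_le
      (hdiff.continuous.continuousOn)
      (fun y _ => (hdiff y).differentiableWithinAt)
      (fun y hy => by
        rw [interior_Iic] at hy
        exact (hderiv y (le_abs.2 (Or.inr (by linarith [hy.out])))).2)
      s hs (-1) Set.self_mem_Iic hs
  have hD1 : 0 ≤ D 1 := h0 ▸ hmono (by norm_num)
  have hD1K : D 1 ≤ K := by have := hub 1 (by norm_num) le_rfl; linarith
  have hDn1 : D (-1) ≤ 0 := h0 ▸ hmono (by norm_num)
  have hDn1K : -K ≤ D (-1) := by have := hlbneg (-1) le_rfl (by norm_num); linarith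
  have main : ∀ s : ℝ, (D s) ^ 2 + s ^ 2 ≤ 4 + (2 / m + L) * (D s * s) := by
    intro s
    have hDs0 : 0 ≤ D s * s := by
      rcases le_total 0 s with h | h
      · exact mul_nonneg (h0 ▸ hmono h) h
      · nlinarith [mul_nonneg (neg_nonneg.2 (h0 ▸ hmono h)) (neg_nonneg.2 h)]
    have h2m : 0 ≤ 2 / m := by positivity
    rcases le_or_gt s (-1) with hs | hs
    · -- s ≤ -1
      have h1 := hgen1 s hs
      have h2 := hlen1 s hs
      have h5 : D s ≤ 0 := h0 ▸ hmono (by linarith)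
      have key1 : -D s ≤ L * (-s) := by
        nlinarith [mul_nonneg (sub_nonneg.2 hML) (by linarith : (0:ℝ) ≤ -1 - s)]
      have key2 : m * ((-s) * (-s - 1)) ≤ D s * s := by
        nlinarith [mul_le_mul_of_nonneg_left (by linarith : m * (-1 - s) ≤ -D s)
          (by linarith : (0:ℝ) ≤ -s)]
      have h6 : (D s) ^ 2 ≤ L * (D s * s) := by
        nlinarith [mul_le_mul_of_nonneg_right key1 (neg_nonneg.2 h5)]
      have h7 : 2 * ((-s) * (-s - 1)) ≤ 2 / m * (D s * s) := by
        rw [div_mul_eq_mul_div, le_div_iff₀ hm]; nlinarith [key2]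
      nlinarith [sq_nonneg (s + 1), h6, h7, hDs0, hL0]
    rcases lt_or_ge s 1 with hs1 | hs1
    · -- -1 < s < 1
      rcases le_total 0 s with hsp | hsn
      · have h1 := hub s hsp hs1.le
        have h2 : 0 ≤ D s := h0 ▸ hmono hsp
        have h6 : (D s) ^ 2 ≤ L * (D s * s) := by
          nlinarith [mul_le_mul_of_nonneg_right h1 h2,
            mul_nonneg (sub_nonneg.2 hKL) hDs0]
        nlinarith [h6, mul_nonneg h2m hDs0, hL0]
      · have h1 := hlbneg s hs.le hsn
        have h2 : D s ≤ 0 := h0 ▸ hmono hsn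
        have h6 : (D s) ^ 2 ≤ L * (D s * s) := by
          nlinarith [mul_le_mul_of_nonneg_right (by linarith : -D s ≤ K * (-s))
            (neg_nonneg.2 h2), mul_nonneg (sub_nonneg.2 hKL) hDs0]
        nlinarith [h6, mul_nonneg h2m hDs0, hL0]
    · -- 1 ≤ s
      have h1 := hge1 s hs1
      have h2 := hle1 s hs1
      have h5 : 0 ≤ D s := h0 ▸ hmono (by linarith)
      have key1 : D s ≤ L * s := by
        nlinarith [mul_nonneg (sub_nonneg.2 hML) (by linarith : (0:ℝ) ≤ s - 1)]
      have key2 : m * (s * (s - 1)) ≤ D s * s := by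
        nlinarith [mul_le_mul_of_nonneg_left (by linarith : m * (s - 1) ≤ D s)
          (by linarith : (0:ℝ) ≤ s)]
      have h6 : (D s) ^ 2 ≤ L * (D s * s) := by
        nlinarith [mul_le_mul_of_nonneg_right key1 h5]
      have h7 : 2 * (s * (s - 1)) ≤ 2 / m * (D s * s) := by
        rw [div_mul_eq_mul_div, le_div_iff₀ hm]; nlinarith [key2]
      nlinarith [sq_nonneg (s - 1), h6, h7, hDs0, hL0]
  exact ⟨⟨4, 2 / m + L, by norm_num,
    add_pos_of_pos_of_nonneg (by positivity) hL0, main⟩, main⟩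
end

section
/- Let H and H₁ be real inner product spaces, let G : H → H₁ and L : H → H be continuous linear maps satisfying ⟪L x, y⟫ = −⟪G x, G y⟫ for all x, y ∈ H, and let γ ∈ ℝ. Define f_B : H → H by f_B(x) = (γ − ‖G x‖²)·L x. Let u, w : ℝ → H be continuously differentiable, set z = u − w and 𝓕(τ) = f_B(u(τ)) − f_B(w(τ)). Then for all real t ≤ T: ∫_t^T ⟪𝓕(τ), z′(τ)⟫ dτ = [ ⟪𝓕(τ), z(τ)⟫ + (γ/2)·‖G z(τ)‖² − ½·‖G u(τ)‖²·‖G z(τ)‖² + (‖G u(τ)‖² − ‖G w(τ)‖²)·⟪L w(τ), z(τ)⟫ ] evaluated from τ = t to τ = T, minus ∫_t^T (‖G u(τ)‖² − ‖G w(τ)‖²)·⟪L w(τ), z′(τ)⟫ dτ, plus ∫_t^T ⟪L u(τ), u′(τ)⟫·‖G z(τ)‖² dτ. -/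
open scoped RealInnerProductSpace
open intervalIntegral

/-- Decomposition of the Berger nonlinearity for the difference of two solutions:
with `fB x = (γ − ‖G x‖²) • L x`, `⟪L x, y⟫ = −⟪G x, G y⟫`, `z = u − w` and
`𝓕 τ = fB (u τ) − fB (w τ)`, one has for `t ≤ T`:
`∫_t^T ⟪𝓕, z'⟫ = [⟪𝓕, z⟫ + (γ/2)‖Gz‖² − ½‖Gu‖²‖Gz‖² + (‖Gu‖²−‖Gw‖²)⟪Lw, z⟫]_t^T
  − ∫_t^T (‖Gu‖²−‖Gw‖²)⟪Lw, z'⟫ + ∫_t^T ⟪Lu, u'⟫‖Gz‖²`. -/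
theorem berger_difference_decomposition {H H₁ : Type*}
    [NormedAddCommGroup H] [InnerProductSpace ℝ H]
    [NormedAddCommGroup H₁] [InnerProductSpace ℝ H₁]
    (G : H →L[ℝ] H₁) (L : H →L[ℝ] H)
    (hGL : ∀ x y : H, ⟪L x, y⟫ = -⟪G x, G y⟫)
    (γ : ℝ) (fB : H → H) (hfB : ∀ x, fB x = (γ - ‖G x‖ ^ 2) • L x)
    (u w : ℝ → H) (hu : ContDiff ℝ 1 u) (hw : ContDiff ℝ 1 w)
    (z : ℝ → H) (hz : ∀ τ, z τ = u τ - w τ)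
    (𝓕 : ℝ → H) (h𝓕 : ∀ τ, 𝓕 τ = fB (u τ) - fB (w τ))
    (t T : ℝ) (htT : t ≤ T) :
    (∫ τ in t..T, ⟪𝓕 τ, deriv z τ⟫) =
      ((⟪𝓕 T, z T⟫ + (γ / 2) * ‖G (z T)‖ ^ 2
          - (1 / 2) * ‖G (u T)‖ ^ 2 * ‖G (z T)‖ ^ 2
          + (‖G (u T)‖ ^ 2 - ‖G (w T)‖ ^ 2) * ⟪L (w T), z T⟫)
        - (⟪𝓕 t, z t⟫ + (γ / 2) * ‖G (z t)‖ ^ 2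
          - (1 / 2) * ‖G (u t)‖ ^ 2 * ‖G (z t)‖ ^ 2
          + (‖G (u t)‖ ^ 2 - ‖G (w t)‖ ^ 2) * ⟪L (w t), z t⟫))
      - (∫ τ in t..T, (‖G (u τ)‖ ^ 2 - ‖G (w τ)‖ ^ 2) * ⟪L (w τ), deriv z τ⟫)
      + ∫ τ in t..T, ⟪L (u τ), deriv u τ⟫ * ‖G (z τ)‖ ^ 2 := by
  have hzf : z = fun τ => u τ - w τ := funext hz
  have h𝓕f : 𝓕 = fun τ => fB (u τ) - fB (w τ) := funext h𝓕
  have hfBf : fB = fun x => (γ - ‖G x‖ ^ 2) • L x := funext hfB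
  subst hzf h𝓕f hfBf
  set p := deriv u with hp
  set q := deriv w with hq
  have hud : ∀ τ, HasDerivAt u (p τ) τ := fun τ => (hu.differentiable one_ne_zero τ).hasDerivAt
  have hwd : ∀ τ, HasDerivAt w (q τ) τ := fun τ => (hw.differentiable one_ne_zero τ).hasDerivAt
  have hpc : Continuous p := hu.continuous_deriv le_rfl
  have hqc : Continuous q := hw.continuous_deriv le_rfl
  have huc : Continuous u := hu.continuous
  have hwc : Continuous w := hw.continuous
  have hzd : ∀ τ, HasDerivAt (fun s => u s - w s) (p τ - q τ) τ := fun τ => (hud τ).sub (hwd τ)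
  have hderivz : deriv (fun s => u s - w s) = fun τ => p τ - q τ :=
    funext fun τ => (hzd τ).deriv
  simp only [hderivz]
  -- G-composed derivatives
  have hGu : ∀ τ, HasDerivAt (fun s => G (u s)) (G (p τ)) τ :=
    fun τ => (G.hasFDerivAt.comp_hasDerivAt τ (hud τ))
  have hGw : ∀ τ, HasDerivAt (fun s => G (w s)) (G (q τ)) τ :=
    fun τ => (G.hasFDerivAt.comp_hasDerivAt τ (hwd τ))
  -- scalar inner-product functions and their derivatives
  have hα : ∀ τ, HasDerivAt (fun s => ⟪G (u s), G (u s)⟫) (2 * ⟪G (u τ), G (p τ)⟫) τ := by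
    intro τ
    have h : HasDerivAt (fun s => ⟪G (u s), G (u s)⟫) (⟪G (u τ), G (p τ)⟫ + ⟪G (p τ), G (u τ)⟫) τ :=
      HasDerivAt.inner ℝ (hGu τ) (hGu τ)
    convert h using 1
    rw [real_inner_comm (G (p τ)) (G (u τ))]; ring
  have hβ : ∀ τ, HasDerivAt (fun s => ⟪G (w s), G (w s)⟫) (2 * ⟪G (w τ), G (q τ)⟫) τ := by
    intro τ
    have h : HasDerivAt (fun s => ⟪G (w s), G (w s)⟫) (⟪G (w τ), G (q τ)⟫ + ⟪G (q τ), G (w τ)⟫) τ :=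
      HasDerivAt.inner ℝ (hGw τ) (hGw τ)
    convert h using 1
    rw [real_inner_comm (G (q τ)) (G (w τ))]; ring
  have hδ : ∀ τ, HasDerivAt (fun s => ⟪G (u s), G (w s)⟫)
      (⟪G (u τ), G (q τ)⟫ + ⟪G (w τ), G (p τ)⟫) τ := by
    intro τ
    have h : HasDerivAt (fun s => ⟪G (u s), G (w s)⟫) (⟪G (u τ), G (q τ)⟫ + ⟪G (p τ), G (w τ)⟫) τ :=
      HasDerivAt.inner ℝ (hGu τ) (hGw τ)
    convert h using 1
    rw [real_inner_comm (G (p τ)) (G (w τ))]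
  -- the bracket function
  set Br : ℝ → ℝ := fun τ =>
      ⟪(γ - ‖G (u τ)‖ ^ 2) • L (u τ) - (γ - ‖G (w τ)‖ ^ 2) • L (w τ), u τ - w τ⟫
      + (γ / 2) * ‖G (u τ - w τ)‖ ^ 2
      - (1 / 2) * ‖G (u τ)‖ ^ 2 * ‖G (u τ - w τ)‖ ^ 2
      + (‖G (u τ)‖ ^ 2 - ‖G (w τ)‖ ^ 2) * ⟪L (w τ), u τ - w τ⟫ with hBr
  -- the three integrands
  set I : ℝ → ℝ := fun τ =>
      ⟪(γ - ‖G (u τ)‖ ^ 2) • L (u τ) - (γ - ‖G (w τ)‖ ^ 2) • L (w τ), p τ - q τ⟫ with hI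
  set J : ℝ → ℝ := fun τ =>
      (‖G (u τ)‖ ^ 2 - ‖G (w τ)‖ ^ 2) * ⟪L (w τ), p τ - q τ⟫ with hJ
  set K : ℝ → ℝ := fun τ => ⟪L (u τ), p τ⟫ * ‖G (u τ - w τ)‖ ^ 2 with hK
  -- rewrite Br as a polynomial in inner products
  have hBrEq : Br = fun s =>
      -(γ - ⟪G (u s), G (u s)⟫) * (⟪G (u s), G (u s)⟫ - ⟪G (u s), G (w s)⟫)
      + (γ - ⟪G (w s), G (w s)⟫) * (⟪G (u s), G (w s)⟫ - ⟪G (w s), G (w s)⟫)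
      + (γ / 2) * (⟪G (u s), G (u s)⟫ - 2 * ⟪G (u s), G (w s)⟫ + ⟪G (w s), G (w s)⟫)
      - (1 / 2) * ⟪G (u s), G (u s)⟫ *
          (⟪G (u s), G (u s)⟫ - 2 * ⟪G (u s), G (w s)⟫ + ⟪G (w s), G (w s)⟫)
      - (⟪G (u s), G (u s)⟫ - ⟪G (w s), G (w s)⟫) *
          (⟪G (u s), G (w s)⟫ - ⟪G (w s), G (w s)⟫) := by
    funext s
    have hc : ⟪G (w s), G (u s)⟫ = ⟪G (u s), G (w s)⟫ := real_inner_comm _ _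
    simp only [hBr, ← real_inner_self_eq_norm_sq, inner_sub_left, inner_sub_right,
      real_inner_smul_left, hGL, map_sub, hc]
    ring
  -- key derivative fact
  have key : ∀ τ, HasDerivAt Br (I τ + J τ - K τ) τ := by
    intro τ
    rw [hBrEq]
    have h1 := (((hasDerivAt_const τ γ).sub (hα τ)).mul ((hα τ).sub (hδ τ))).neg
    have h2 := ((hasDerivAt_const τ γ).sub (hβ τ)).mul ((hδ τ).sub (hβ τ))
    have h3 := (hasDerivAt_const τ (γ / 2)).mul
      (((hα τ).sub ((hδ τ).const_mul 2)).add (hβ τ))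
    have h4 := (((hasDerivAt_const τ (1 / 2 : ℝ)).mul (hα τ)).mul
      (((hα τ).sub ((hδ τ).const_mul 2)).add (hβ τ)))
    have h5 := ((hα τ).sub (hβ τ)).mul ((hδ τ).sub (hβ τ))
    have hraw := ((((h1.add h2).add h3).sub h4).sub h5)
    refine (hraw.congr_deriv ?_).congr_of_eventuallyEq ?_
    · have hc : ⟪G (w τ), G (u τ)⟫ = ⟪G (u τ), G (w τ)⟫ := real_inner_comm _ _
      simp only [hI, hJ, hK, ← real_inner_self_eq_norm_sq, inner_sub_left, inner_sub_right,
        real_inner_smul_left, hGL, map_sub, hc, Pi.add_apply, Pi.sub_apply, Pi.mul_apply,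
        Pi.neg_apply]
      ring
    · exact Filter.Eventually.of_forall fun s => by
        simp only [Pi.add_apply, Pi.sub_apply, Pi.mul_apply, Pi.neg_apply]; ring
  -- continuity of the integrands
  have hGuc : Continuous fun τ => G (u τ) := G.continuous.comp huc
  have hGwc : Continuous fun τ => G (w τ) := G.continuous.comp hwc
  have hGpc : Continuous fun τ => G (p τ) := G.continuous.comp hpc
  have hGqc : Continuous fun τ => G (q τ) := G.continuous.comp hqc
  have hIc : Continuous I := by
    apply Continuous.inner
    · exact ((continuous_const.sub ((hGuc.norm).pow 2)).smul
        (L.continuous.comp huc)).sub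
        ((continuous_const.sub ((hGwc.norm).pow 2)).smul (L.continuous.comp hwc))
    · exact hpc.sub hqc
  have hJc : Continuous J := by
    apply Continuous.mul
    · exact ((hGuc.norm).pow 2).sub ((hGwc.norm).pow 2)
    · exact Continuous.inner (L.continuous.comp hwc) (hpc.sub hqc)
  have hKc : Continuous K := by
    apply Continuous.mul
    · exact Continuous.inner (L.continuous.comp huc) hpc
    · exact ((G.continuous.comp (huc.sub hwc)).norm).pow 2
  -- fundamental theorem of calculus
  have hFTC : ∫ τ in t..T, (I τ + J τ - K τ) = Br T - Br t := by
    apply integral_eq_sub_of_hasDerivAt (fun τ _ => key τ)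
    exact ((hIc.add hJc).sub hKc).intervalIntegrable t T
  have hsplit : ∫ τ in t..T, (I τ + J τ - K τ)
      = (∫ τ in t..T, I τ) + (∫ τ in t..T, J τ) - ∫ τ in t..T, K τ := by
    rw [integral_sub ((hIc.intervalIntegrable t T).add (hJc.intervalIntegrable t T))
      (hKc.intervalIntegrable t T),
      integral_add (hIc.intervalIntegrable t T) (hJc.intervalIntegrable t T)]
  have hgoal : (∫ τ in t..T, I τ)
      = (Br T - Br t) - (∫ τ in t..T, J τ) + ∫ τ in t..T, K τ := by
    rw [← hFTC, hsplit]; ring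
  exact hgoal
end
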